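/- Let N1 ≥ 1 and N2 ≥ 1 be integers and let D_na = {0, 1, ..., N1−1} ∪ {(m+1)(N1+1)−1 : 0 ≤ m ≤ N2−1} be the two-level nested array position set. Define f(Δ) = sin(πN1Δ/2)/sin(πΔ/2), g(Δ) = sin(π(N1+1)N2Δ/2)/sin(π(N1+1)Δ/2), and Φ(Δ) = π(N1+1)N2Δ/2. Then for every real Δ with sin(πΔ/2) ≠ 0 and sin(π(N1+1)Δ/2) ≠ 0, |Σ_{d∈D_na} exp(iπ d Δ)|² = f(Δ)² + g(Δ)² + 2 f(Δ) g(Δ) cos(Φ(Δ)). -/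

import Mathlib

open Finset

lemma sin_c (x : ℝ) : (Real.sin x : ℂ) = ((Complex.exp ((x:ℂ) * Complex.I))⁻¹ - Complex.exp ((x:ℂ) * Complex.I)) * Complex.I / 2 := by
  rw [Complex.ofReal_sin, Complex.sin, ← Complex.exp_neg]
  ring_nf

lemma geo (n : ℕ) (t : ℝ) (h : Real.sin (t / 2) ≠ 0) :
    ∑ k ∈ Finset.range n, Complex.exp (Complex.I * ((k : ℝ) * t)) =
      Complex.exp (Complex.I * (((n : ℝ) - 1) * t / 2)) *
        ((Real.sin ((n : ℝ) * t / 2) / Real.sin (t / 2) : ℝ) : ℂ) := by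
  set u : ℂ := Complex.exp (((t / 2 : ℝ) : ℂ) * Complex.I) with hu
  have hu0 : u ≠ 0 := Complex.exp_ne_zero _
  have hsin1 : (Real.sin (t / 2) : ℂ) = (u⁻¹ - u) * Complex.I / 2 := sin_c _
  have hun : u ^ n = Complex.exp ((((n : ℝ) * t / 2 : ℝ) : ℂ) * Complex.I) := by
    rw [← Complex.exp_nat_mul]
    congr 1
    push_cast; ring
  have hsinn : (Real.sin ((n : ℝ) * t / 2) : ℂ) = ((u ^ n)⁻¹ - u ^ n) * Complex.I / 2 := by
    rw [hun]; exact sin_c _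
  have hsum : ∀ k : ℕ, Complex.exp (Complex.I * ((k : ℝ) * t)) = (u ^ 2) ^ k := by
    intro k
    rw [← pow_mul, ← Complex.exp_nat_mul]
    congr 1
    push_cast; ring
  have hexp : Complex.exp (Complex.I * (((n : ℝ) - 1) * t / 2)) = u ^ n * u⁻¹ := by
    rw [← Complex.exp_neg, ← Complex.exp_nat_mul, ← Complex.exp_add]
    congr 1
    push_cast; ring
  have hne : u ^ 2 ≠ 1 := by
    intro hcon
    apply h
    have hinv : u⁻¹ = u := inv_eq_of_mul_eq_one_right (by rw [← sq]; exact hcon)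
    have : (Real.sin (t / 2) : ℂ) = 0 := by rw [hsin1, hinv]; ring
    exact_mod_cast this
  have hun0 : u ^ n ≠ 0 := pow_ne_zero n hu0
  have hden : u ^ 2 - 1 ≠ 0 := sub_ne_zero.mpr hne
  have h1u : (1 : ℂ) - u ^ 2 ≠ 0 := sub_ne_zero.mpr (Ne.symm hne)
  have e1 : (u⁻¹ - u) * Complex.I / 2 = (1 - u ^ 2) * Complex.I / (2 * u) := by
    field_simp
  have e2 : ((u ^ n)⁻¹ - u ^ n) * Complex.I / 2
      = (1 - (u ^ 2) ^ n) * Complex.I / (2 * u ^ n) := by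
    field_simp
    ring
  simp only [hsum]
  rw [geom_sum_eq hne, hexp, Complex.ofReal_div, hsin1, hsinn, e1, e2]
  rw [div_div_div_eq]
  field_simp
  ring

lemma abs_comb (a b f g : ℝ) :
    ‖Complex.exp (Complex.I * a) * (f : ℂ) + Complex.exp (Complex.I * b) * (g : ℂ)‖ ^ 2
      = f ^ 2 + g ^ 2 + 2 * f * g * Real.cos (b - a) := by
  rw [mul_comm Complex.I (a : ℂ), mul_comm Complex.I (b : ℂ), Complex.exp_mul_I,
    Complex.exp_mul_I, Complex.sq_norm, ← Complex.ofReal_cos, ← Complex.ofReal_sin,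
    ← Complex.ofReal_cos, ← Complex.ofReal_sin, Real.cos_sub]
  simp [Complex.normSq_apply, Complex.cos_ofReal_re, Complex.sin_ofReal_re]
  linear_combination (f ^ 2) * Real.sin_sq_add_cos_sq a + (g ^ 2) * Real.sin_sq_add_cos_sq b

/-- Two-level nested array position set:
`{0, 1, ..., N1−1} ∪ {(m+1)(N1+1)−1 : 0 ≤ m ≤ N2−1}`. -/
def Dna (N1 N2 : ℕ) : Finset ℕ :=
  Finset.range N1 ∪ (Finset.range N2).image (fun m => (m + 1) * (N1 + 1) - 1)

/-- the squared modulus of the nested-array sum equals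
`f(Δ)² + g(Δ)² + 2 f(Δ) g(Δ) cos(Φ(Δ))` where
`f(Δ) = sin(πN1Δ/2)/sin(πΔ/2)`, `g(Δ) = sin(π(N1+1)N2Δ/2)/sin(π(N1+1)Δ/2)`,
`Φ(Δ) = π(N1+1)N2Δ/2`. -/
theorem nested_array_beam_pattern (N1 N2 : ℕ) (hN1 : 1 ≤ N1) (hN2 : 1 ≤ N2) (Δ : ℝ)
    (h1 : Real.sin (Real.pi * Δ / 2) ≠ 0)
    (h2 : Real.sin (Real.pi * ((N1 : ℝ) + 1) * Δ / 2) ≠ 0) :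
    ‖∑ d ∈ Dna N1 N2, Complex.exp (Complex.I * Real.pi * (d : ℝ) * Δ)‖ ^ 2 =
      (Real.sin (Real.pi * (N1 : ℝ) * Δ / 2) / Real.sin (Real.pi * Δ / 2)) ^ 2 +
      (Real.sin (Real.pi * ((N1 : ℝ) + 1) * (N2 : ℝ) * Δ / 2) /
          Real.sin (Real.pi * ((N1 : ℝ) + 1) * Δ / 2)) ^ 2 +
      2 * (Real.sin (Real.pi * (N1 : ℝ) * Δ / 2) / Real.sin (Real.pi * Δ / 2)) *
        (Real.sin (Real.pi * ((N1 : ℝ) + 1) * (N2 : ℝ) * Δ / 2) /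
          Real.sin (Real.pi * ((N1 : ℝ) + 1) * Δ / 2)) *
        Real.cos (Real.pi * ((N1 : ℝ) + 1) * (N2 : ℝ) * Δ / 2) := by
  have h1' : Real.sin ((Real.pi * Δ) / 2) ≠ 0 := h1
  have h2' : Real.sin ((((N1 : ℝ) + 1) * (Real.pi * Δ)) / 2) ≠ 0 := by
    rwa [show (((N1 : ℝ) + 1) * (Real.pi * Δ)) / 2 = Real.pi * ((N1 : ℝ) + 1) * Δ / 2 by ring]
  have hdisj : Disjoint (Finset.range N1)
      ((Finset.range N2).image (fun m => (m + 1) * (N1 + 1) - 1)) := by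
    rw [Finset.disjoint_left]
    intro a ha hb
    simp only [Finset.mem_range] at ha
    simp only [Finset.mem_image, Finset.mem_range] at hb
    obtain ⟨m, _, hm⟩ := hb
    have hge : N1 + 1 ≤ (m + 1) * (N1 + 1) := Nat.le_mul_of_pos_left _ (Nat.succ_pos m)
    omega
  have hinj : ∀ a ∈ Finset.range N2, ∀ b ∈ Finset.range N2,
      (a + 1) * (N1 + 1) - 1 = (b + 1) * (N1 + 1) - 1 → a = b := by
    intro a _ b _ hab
    have ha1 : 1 ≤ (a + 1) * (N1 + 1) := Nat.one_le_iff_ne_zero.mpr (by positivity)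
    have hb1 : 1 ≤ (b + 1) * (N1 + 1) := Nat.one_le_iff_ne_zero.mpr (by positivity)
    have h : (a + 1) * (N1 + 1) = (b + 1) * (N1 + 1) := by omega
    have := Nat.eq_of_mul_eq_mul_right (Nat.succ_pos N1) h
    omega
  have hterm1 : ∀ d : ℕ, Complex.exp (Complex.I * (Real.pi : ℂ) * (d : ℝ) * (Δ : ℂ))
      = Complex.exp (Complex.I * (((d : ℝ) : ℂ) * ((Real.pi * Δ : ℝ) : ℂ))) := by
    intro d; congr 1; push_cast; ring
  have hterm2 : ∀ m : ℕ,
      Complex.exp (Complex.I * (((((m + 1) * (N1 + 1) - 1 : ℕ) : ℝ) : ℂ) * ((Real.pi * Δ : ℝ) : ℂ)))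
      = Complex.exp (Complex.I * (((N1 : ℝ) : ℂ) * ((Real.pi * Δ : ℝ) : ℂ))) *
        Complex.exp (Complex.I * (((m : ℝ) : ℂ) * ((((N1 : ℝ) + 1) * (Real.pi * Δ) : ℝ) : ℂ))) := by
    intro m
    rw [← Complex.exp_add]
    congr 1
    have hc : (m + 1) * (N1 + 1) - 1 = m * (N1 + 1) + N1 := by
      have : (m + 1) * (N1 + 1) = m * (N1 + 1) + (N1 + 1) := by ring
      omega
    rw [hc]
    push_cast
    ring
  rw [Dna, Finset.sum_union hdisj, Finset.sum_image hinj]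
  simp only [hterm1]
  simp only [hterm2]
  rw [geo N1 (Real.pi * Δ) h1', ← Finset.mul_sum,
    geo N2 (((N1 : ℝ) + 1) * (Real.pi * Δ)) h2']
  rw [show ∀ z w : ℂ, ∀ g : ℝ, z * (w * (g : ℂ)) = (z * w) * (g : ℂ) from fun _ _ _ => by ring,
    ← Complex.exp_add]
  rw [show Complex.exp (Complex.I * ((((N1 : ℝ) : ℂ) - 1) * ((Real.pi * Δ : ℝ) : ℂ) / 2))
      = Complex.exp (Complex.I * ((((N1 : ℝ) - 1) * (Real.pi * Δ) / 2 : ℝ) : ℂ)) from by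
      congr 1; push_cast; ring,
    show Complex.exp (Complex.I * (((N1 : ℝ) : ℂ) * ((Real.pi * Δ : ℝ) : ℂ)) +
        Complex.I * ((((N2 : ℝ) : ℂ) - 1) * (((((N1 : ℝ) + 1) * (Real.pi * Δ)) : ℝ) : ℂ) / 2))
      = Complex.exp (Complex.I * ((((N1 : ℝ) * (Real.pi * Δ) +
          ((N2 : ℝ) - 1) * (((N1 : ℝ) + 1) * (Real.pi * Δ)) / 2) : ℝ) : ℂ)) from by
      congr 1; push_cast; ring,
    abs_comb,
    show ((N1 : ℝ) * (Real.pi * Δ) + ((N2 : ℝ) - 1) * (((N1 : ℝ) + 1) * (Real.pi * Δ)) / 2)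
        - ((N1 : ℝ) - 1) * (Real.pi * Δ) / 2 = Real.pi * ((N1 : ℝ) + 1) * (N2 : ℝ) * Δ / 2 by ring,
    show (N1 : ℝ) * (Real.pi * Δ) / 2 = Real.pi * (N1 : ℝ) * Δ / 2 by ring,
    show (N2 : ℝ) * (((N1 : ℝ) + 1) * (Real.pi * Δ)) / 2
      = Real.pi * ((N1 : ℝ) + 1) * (N2 : ℝ) * Δ / 2 by ring,
    show ((N1 : ℝ) + 1) * (Real.pi * Δ) / 2 = Real.pi * ((N1 : ℝ) + 1) * Δ / 2 by ring]
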